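/- If augmentations t₁,…,t_K are drawn uniformly at random, then the expectation over the augmentation choice of the stochastic log-likelihood gradient ∇_θ log p(y | t_J(x), θ) (J uniform on {1,…,K}) equals ∑_{j=1}^K ∇_θ log p(y | t_j(x), θ)^{1/K}; consequently the stationary distribution of SGLD with per-step random augmentation is proportional to p(θ) ∏_{i=1}^N ∏_{j=1}^K p(y_i | t_j(x_i), θ)^{1/K}, a 1/K-power (temperature K) tempered likelihood over the augmented dataset. -/
import Mathlib


open Real Finset

/-- With a finite set of `K` augmentations sampled uniformly, the expectation over the
augmentation choice of the stochastic log-likelihood gradient equals the sum of the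
gradients of the `1/K`-tempered log-likelihoods; consequently the stationary distribution
of SGLD with per-step random augmentation is proportional to
`prior θ * ∏ᵢ ∏ⱼ p(yᵢ | tⱼ(xᵢ), θ)^{1/K}`, a temperature-`K` tempered likelihood over the
augmented dataset. -/
theorem sgld_augmentation_tempering {d N K : ℕ} (hK : 0 < K)
    (p : Fin N → Fin K → (Fin d → ℝ) → ℝ) (prior : (Fin d → ℝ) → ℝ)
    (hp : ∀ i j θ, 0 < p i j θ) (hprior : ∀ θ, 0 < prior θ)
    (hdiff : ∀ i j θ, DifferentiableAt ℝ (fun θ' => Real.log (p i j θ')) θ) :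
    (∀ (i : Fin N) (θ : Fin d → ℝ),
        (1 / (K : ℝ)) • ∑ j, fderiv ℝ (fun θ' => Real.log (p i j θ')) θ =
          ∑ j, fderiv ℝ (fun θ' => Real.log ((p i j θ') ^ ((1 : ℝ) / K))) θ) ∧
    (∀ θ : Fin d → ℝ,
        Real.exp (Real.log (prior θ) + ∑ i, (1 / (K : ℝ)) * ∑ j, Real.log (p i j θ)) =
          prior θ * ∏ i, ∏ j, (p i j θ) ^ ((1 : ℝ) / K)) := by
  constructor
  · intro i θ
    rw [Finset.smul_sum]
    refine Finset.sum_congr rfl fun j _ => ?_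
    have hfun : (fun θ' => Real.log ((p i j θ') ^ ((1 : ℝ) / K))) =
        fun θ' => (1 / (K : ℝ)) * Real.log (p i j θ') := by
      funext θ'
      rw [Real.log_rpow (hp i j θ'), mul_comm]
    rw [hfun, fderiv_const_mul (hdiff i j θ)]
  · intro θ
    rw [Real.exp_add, Real.exp_log (hprior θ), Real.exp_sum]
    congr 1
    refine Finset.prod_congr rfl fun i _ => ?_
    rw [Finset.mul_sum, Real.exp_sum]
    refine Finset.prod_congr rfl fun j _ => ?_
    rw [Real.rpow_def_of_pos (hp i j θ), mul_comm]
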